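/- Let V ∈ ℝ^{m×m} be a symmetric positive definite matrix and let X ∈ ℝ^{m×n} be arbitrary. Then Xᵀ V X (Xᵀ V X)⁺ Xᵀ = Xᵀ. -/

import Mathlib

open Matrix

/-- `P` is the Moore–Penrose pseudoinverse of `M`. -/
def IsMoorePenrose {m n : Type*} [Fintype m] [Fintype n]
    (M : Matrix m n ℝ) (P : Matrix n m ℝ) : Prop :=
  M * P * M = M ∧ P * M * P = P ∧ (M * P)ᵀ = M * P ∧ (P * M)ᵀ = P * M

/-- For a symmetric positive definite `V` and any `X`,
`Xᵀ V X (Xᵀ V X)⁺ Xᵀ = Xᵀ`. -/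
theorem posdef_sandwich_pinv {m n : ℕ}
    (V : Matrix (Fin m) (Fin m) ℝ) (hV : V.PosDef)
    (X : Matrix (Fin m) (Fin n) ℝ)
    (P : Matrix (Fin n) (Fin n) ℝ) (hP : IsMoorePenrose (Xᵀ * V * X) P) :
    Xᵀ * V * X * P * Xᵀ = Xᵀ := by
  obtain ⟨h1, -, -, -⟩ := hP
  have hps := hV.posSemidef
  set S := (open scoped MatrixOrder in CFC.sqrt V) with hSdef
  have hSS : S * S = V := by open scoped MatrixOrder in exact CFC.sqrt_mul_sqrt_self V hps.nonneg
  have hSsym : Sᵀ = S := by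
    have := (open scoped MatrixOrder in (CFC.sqrt_nonneg V).posSemidef.1)
    simpa [Matrix.IsHermitian, Matrix.conjTranspose_eq_transpose_of_trivial] using this
  -- S is invertible
  have hdet : IsUnit S.det := by
    have hVdet : 0 < V.det := hV.det_pos
    rw [← hSS, Matrix.det_mul] at hVdet
    exact isUnit_iff_ne_zero.2 (by nlinarith)
  have hSunit : IsUnit S := (Matrix.isUnit_iff_isUnit_det S).2 hdet
  letI := hSunit.invertible
  set A := Xᵀ * V * X with hAdef
  have hAY : Xᵀ * S * (S * X) = A := by
    rw [hAdef, ← hSS]; simp only [Matrix.mul_assoc]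
  set D := A * P * (Xᵀ * S) - Xᵀ * S with hDdef
  have ht : (Xᵀ * S)ᵀ = S * X := by
    rw [Matrix.transpose_mul, hSsym, Matrix.transpose_transpose]
  have hDY : D * (S * X) = 0 := by
    have e1 : A * P * (Xᵀ * S) * (S * X) = A := by
      rw [Matrix.mul_assoc (A * P), hAY, h1]
    rw [hDdef, Matrix.sub_mul, e1, hAY, sub_self]
  have hDt : Dᵀ = S * X * (A * P)ᵀ - S * X := by
    rw [hDdef, Matrix.transpose_sub, ht]
    rw [show A * P * (Xᵀ * S) = (A * P) * (Xᵀ * S) from rfl, Matrix.transpose_mul, ht]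
  have hD : D * Dᵀ = 0 := by
    rw [hDt, Matrix.mul_sub, ← Matrix.mul_assoc, hDY, Matrix.zero_mul, sub_self]
  have hD0 : D = 0 := by
    have : D * Dᴴ = 0 := by
      simpa [Matrix.conjTranspose_eq_transpose_of_trivial] using hD
    exact Matrix.self_mul_conjTranspose_eq_zero.mp this
  have hEq : A * P * Xᵀ * S = Xᵀ * S := by
    have := sub_eq_zero.mp hD0
    rw [← Matrix.mul_assoc] at this
    exact this
  calc A * P * Xᵀ = A * P * Xᵀ * S * ⅟S := by rw [Matrix.mul_invOf_cancel_right]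
    _ = Xᵀ * S * ⅟S := by rw [hEq]
    _ = Xᵀ := by rw [Matrix.mul_invOf_cancel_right]
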